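/- Doubly robust property with misspecified propensity score: if p̃(X) is any measurable function bounded away from 0 and 1 (possibly ≠ p(X)), then under unconfoundedness, E[ D(Y - m₁(X))/p̃(X) - (1-D)(Y - m₀(X))/(1-p̃(X)) + m₁(X) - m₀(X) | X ] = m₁(X) - m₀(X), provided m₁, m₀ are the true outcome regressions. -/

import Mathlib

open MeasureTheory ProbabilityTheory

lemma abs_integral_abs_sub_le {α : Type*} [MeasurableSpace α] {μ : Measure α} {u v : α → ℝ}
    (hu : Integrable u μ) (hv : Integrable v μ) :
    |(∫ x, |u x| ∂μ) - ∫ x, |v x| ∂μ| ≤ ∫ x, |u x - v x| ∂μ := by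
  have h1 : |∫ x, (|u x| - |v x|) ∂μ| ≤ ∫ x, |(|u x| - |v x|)| ∂μ := by
    simpa [Real.norm_eq_abs] using
      norm_integral_le_integral_norm (μ := μ) (fun x => |u x| - |v x|)
  rw [integral_sub hu.abs hv.abs] at h1
  refine h1.trans (integral_mono (hu.abs.sub hv.abs).abs (hu.sub hv).abs fun x => ?_)
  exact abs_abs_sub_abs_le_abs_sub _ _

lemma condexp_mul_of_condIndepFun
    {Ω : Type*} {m' : MeasurableSpace Ω} [mΩ : MeasurableSpace Ω] [StandardBorelSpace Ω]
    [Nonempty Ω] (hm' : m' ≤ mΩ)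
    {μ : Measure Ω} [IsProbabilityMeasure μ]
    {f D : Ω → ℝ} (hf : Measurable f) (hfi : Integrable f μ)
    (hD : Measurable D) (hD01 : ∀ ω, D ω = 0 ∨ D ω = 1)
    (hindep : CondIndepFun m' hm' f D μ) :
    μ[fun ω => f ω * D ω | m'] =ᵐ[μ] fun ω => (μ[f|m']) ω * (μ[D|m']) ω := by
  classical
  set A : Set Ω := D ⁻¹' {1} with hA_def
  have hA : MeasurableSet A := hD (measurableSet_singleton _)
  have hDind : D = A.indicator (fun _ => (1:ℝ)) := by
    funext ω
    rcases hD01 ω with h | h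
    · have : ω ∉ A := by simp [hA_def, Set.mem_preimage, h]
      simp [Set.indicator_apply, this, h]
    · have : ω ∈ A := by simp [hA_def, Set.mem_preimage, h]
      simp [Set.indicator_apply, this, h]
  have hkey := (condIndepFun_iff_condExp_inter_preimage_eq_mul (m' := m') (hm' := hm') (μ := μ) hf hD).mp hindep
  set ν : Measure ℝ := μ.map f with hν_def
  haveI : IsProbabilityMeasure ν := Measure.isProbabilityMeasure_map hf.aemeasurable
  -- the predicate for induction
  set P : (ℝ → ℝ) → Prop := fun φ =>
    μ[fun ω => φ (f ω) * D ω | m'] =ᵐ[μ]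
      fun ω => (μ[fun ω => φ (f ω)|m']) ω * (μ[D|m']) ω with hP_def
  -- integrability transfer
  have hint : ∀ {φ : ℝ → ℝ}, Integrable φ ν → Integrable (fun ω => φ (f ω)) μ := by
    intro φ hφ
    exact (integrable_map_measure hφ.aestronglyMeasurable hf.aemeasurable).mp hφ
  have hmulint : ∀ {φ : ℝ → ℝ}, Integrable φ ν → Integrable (fun ω => φ (f ω) * D ω) μ := by
    intro φ hφ
    have : Integrable (fun ω => D ω * (φ (f ω))) μ := by
      refine Integrable.bdd_mul (hint hφ) hD.aestronglyMeasurable (c := 1) (ae_of_all _ fun ω => ?_)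
      rcases hD01 ω with h | h <;> simp [h]
    exact this.congr (Filter.Eventually.of_forall fun ω => mul_comm _ _)
  have hmain : ∀ ⦃φ : ℝ → ℝ⦄, Integrable φ ν → P φ := by
    refine Integrable.induction P ?_ ?_ ?_ ?_
    · -- indicator case
      intro c s hs hνs
      have h1 : (fun ω => (s.indicator (fun _ => c) (f ω)) * D ω)
          = c • ((f ⁻¹' s ∩ A).indicator (fun _ => (1:ℝ))) := by
        funext ω
        rw [hDind]
        by_cases hfs : f ω ∈ s <;> by_cases hωA : ω ∈ A <;>
          simp [Set.indicator_apply, hfs, hωA, Pi.smul_apply, smul_eq_mul]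
      have h2 : (fun ω => s.indicator (fun _ => c) (f ω))
          = c • ((f ⁻¹' s).indicator (fun _ => (1:ℝ))) := by
        funext ω
        by_cases hfs : f ω ∈ s <;> simp [Set.indicator_apply, hfs, Pi.smul_apply, smul_eq_mul]
      show (μ[fun ω => (s.indicator (fun _ => c) (f ω)) * D ω | m']) =ᵐ[μ] _
      rw [h1, h2]
      have e1 := condExp_smul (μ := μ) (m := m') c ((f ⁻¹' s ∩ A).indicator (fun _ => (1:ℝ)))
      have e2 := condExp_smul (μ := μ) (m := m') c ((f ⁻¹' s).indicator (fun _ => (1:ℝ)))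
      have e3 := hkey s {1} hs (measurableSet_singleton _)
      have e4 : μ[D|m'] = μ[A.indicator (fun _ => (1:ℝ))|m'] := by rw [← hDind]
      filter_upwards [e1, e2, e3] with ω h1' h2' h3'
      simp only [Pi.smul_apply, smul_eq_mul] at h1' h2' ⊢
      rw [h1', h2', e4]
      rw [show (f ⁻¹' s ∩ A) = (f ⁻¹' s ∩ D ⁻¹' {1}) from rfl] at h3'
      rw [h3']
      ring
    · -- additivity
      intro φ ψ _ hφ hψ hPφ hPψ
      have hadd1 : (fun ω => (φ + ψ) (f ω) * D ω)
          =ᵐ[μ] (fun ω => φ (f ω) * D ω) + (fun ω => ψ (f ω) * D ω) := by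
        refine Filter.Eventually.of_forall fun ω => ?_
        simp [Pi.add_apply, add_mul]
      have hadd2 : (fun ω => (φ + ψ) (f ω))
          =ᵐ[μ] (fun ω => φ (f ω)) + (fun ω => ψ (f ω)) := by
        refine Filter.Eventually.of_forall fun ω => ?_
        simp [Pi.add_apply]
      have c1 := condExp_congr_ae (m := m') hadd1
      have c2 := condExp_congr_ae (m := m') hadd2
      have c3 := condExp_add (μ := μ) (m := m') (hmulint hφ) (hmulint hψ)
      have c4 := condExp_add (μ := μ) (m := m') (hint hφ) (hint hψ)
      filter_upwards [c1, c2, c3, c4, hPφ, hPψ] with ω h1' h2' h3' h4' h5' h6'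
      simp only [Pi.add_apply] at *
      rw [h1', h3', h5', h6', h2', h4']
      ring
    · -- closedness
      have hDbd : ∀ ω, ‖D ω‖ ≤ 1 := fun ω => by rcases hD01 ω with h | h <;> simp [h]
      have hDi : Integrable D μ :=
        Integrable.mono' (integrable_const 1) hD.aestronglyMeasurable (ae_of_all _ hDbd)
      have hmulD : ∀ {g : Ω → ℝ}, Integrable g μ → Integrable (fun ω => g ω * D ω) μ := by
        intro g hg
        exact (Integrable.bdd_mul hg hD.aestronglyMeasurable (ae_of_all _ hDbd)).congr
          (Filter.Eventually.of_forall fun ω => mul_comm _ _)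
      have hcD : ∀ᵐ ω ∂μ, |(μ[D|m']) ω| ≤ 1 := by
        have h0 : (0 : Ω → ℝ) ≤ᵐ[μ] μ[D|m'] :=
          condExp_nonneg (ae_of_all _ fun ω => by rcases hD01 ω with h | h <;> simp [h])
        have h1 : μ[D|m'] ≤ᵐ[μ] μ[fun _ => (1:ℝ)|m'] :=
          condExp_mono hDi (integrable_const (1:ℝ))
            (ae_of_all _ fun ω => by rcases hD01 ω with h | h <;> simp [h])
        rw [condExp_const hm'] at h1
        filter_upwards [h0, h1] with ω ha hb
        rw [abs_le]
        have ha' : (0:ℝ) ≤ (μ[D|m']) ω := by simpa using ha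
        exact ⟨by linarith, hb⟩
      -- defect functional
      set L : (Ω → ℝ) → Ω → ℝ := fun g ω =>
        (μ[fun ω' => g ω' * D ω'|m']) ω - (μ[g|m']) ω * (μ[D|m']) ω with hL_def
      have hprodint : ∀ (g : Ω → ℝ),
          Integrable (fun ω => (μ[g|m']) ω * (μ[D|m']) ω) μ := by
        intro g
        refine (Integrable.bdd_mul (c := 1) (integrable_condExp (f := g))
          (stronglyMeasurable_condExp.mono hm').aestronglyMeasurable ?_).congr
          (Filter.Eventually.of_forall fun ω => mul_comm _ _)
        filter_upwards [hcD] with ω h using by simpa [Real.norm_eq_abs] using h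
      have hLint : ∀ (g : Ω → ℝ), Integrable (L g) μ := fun g =>
        integrable_condExp.sub (hprodint g)
      have hLsub : ∀ {g h : Ω → ℝ}, Integrable g μ → Integrable h μ →
          (fun ω => L g ω - L h ω) =ᵐ[μ] L (fun ω => g ω - h ω) := by
        intro g h hg hh
        have egD : (fun ω => (g ω - h ω) * D ω)
            = (fun ω => g ω * D ω) - fun ω => h ω * D ω := by
          funext ω; simp [sub_mul]
        have e1 : μ[fun ω => (g ω - h ω) * D ω|m']
            =ᵐ[μ] μ[fun ω => g ω * D ω|m'] - μ[fun ω => h ω * D ω|m'] := by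
          rw [egD]; exact condExp_sub (hmulD hg) (hmulD hh) m'
        have e2 : μ[fun ω => g ω - h ω|m'] =ᵐ[μ] μ[g|m'] - μ[h|m'] :=
          condExp_sub hg hh m'
        filter_upwards [e1, e2] with ω a b
        simp only [L, Pi.sub_apply] at *
        rw [a, b]
        ring
      -- the functional G
      set G : (ℝ →₁[ν] ℝ) → ℝ := fun φ => ∫ ω, |L (fun ω' => (φ : ℝ → ℝ) (f ω')) ω| ∂μ
        with hG_def
      have hcompInt : ∀ φ : ℝ →₁[ν] ℝ, Integrable (fun ω => (φ : ℝ → ℝ) (f ω)) μ :=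
        fun φ => hint (L1.integrable_coeFn φ)
      have hset : {φ : ℝ →₁[ν] ℝ | P ⇑φ} = G ⁻¹' {0} := by
        ext φ
        simp only [Set.mem_setOf_eq, Set.mem_preimage, Set.mem_singleton_iff, hG_def]
        constructor
        · intro h
          have h0 : (fun ω => |L (fun ω' => (φ : ℝ → ℝ) (f ω')) ω|) =ᵐ[μ] 0 := by
            filter_upwards [h] with ω hω
            simp only [L, Pi.zero_apply, abs_eq_zero, sub_eq_zero]
            exact hω
          rw [integral_congr_ae h0]
          simp
        · intro h
          have h0 := (integral_eq_zero_iff_of_nonneg (fun ω => abs_nonneg _)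
            (hLint _).abs).mp h
          filter_upwards [h0] with ω hω
          have : L (fun ω' => (φ : ℝ → ℝ) (f ω')) ω = 0 := by
            simpa [abs_eq_zero] using hω
          simpa [L, sub_eq_zero] using this
      rw [hset]
      refine IsClosed.preimage ?_ isClosed_singleton
      refine (LipschitzWith.of_dist_le_mul (K := 2) fun φ ψ => ?_).continuous
      set η : Ω → ℝ := fun ω => (φ : ℝ → ℝ) (f ω) - (ψ : ℝ → ℝ) (f ω) with hη_def
      have hηi : Integrable η μ := (hcompInt φ).sub (hcompInt ψ)
      rw [Real.dist_eq, hG_def]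
      calc |(∫ ω, |L (fun ω' => (φ : ℝ → ℝ) (f ω')) ω| ∂μ)
            - ∫ ω, |L (fun ω' => (ψ : ℝ → ℝ) (f ω')) ω| ∂μ|
          ≤ ∫ ω, |L (fun ω' => (φ : ℝ → ℝ) (f ω')) ω
              - L (fun ω' => (ψ : ℝ → ℝ) (f ω')) ω| ∂μ :=
            abs_integral_abs_sub_le (hLint _) (hLint _)
        _ = ∫ ω, |L η ω| ∂μ := by
            refine integral_congr_ae ?_
            filter_upwards [hLsub (hcompInt φ) (hcompInt ψ)] with ω h
            rw [h]
        _ ≤ ∫ ω, (|(μ[fun ω' => η ω' * D ω'|m']) ω| + |(μ[η|m']) ω * (μ[D|m']) ω|) ∂μ := by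
            refine integral_mono (hLint _).abs
              (integrable_condExp.abs.add (hprodint η).abs) fun ω => ?_
            exact abs_sub _ _
        _ = (∫ ω, |(μ[fun ω' => η ω' * D ω'|m']) ω| ∂μ)
              + ∫ ω, |(μ[η|m']) ω * (μ[D|m']) ω| ∂μ :=
            integral_add integrable_condExp.abs (hprodint η).abs
        _ ≤ (∫ ω, |η ω * D ω| ∂μ) + ∫ ω, |(μ[η|m']) ω| ∂μ := by
            refine add_le_add ?_ ?_
            · exact integral_abs_condExp_le _
            · refine integral_mono_ae (hprodint η).abs integrable_condExp.abs ?_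
              filter_upwards [hcD] with ω h
              calc |(μ[η|m']) ω * (μ[D|m']) ω| = |(μ[η|m']) ω| * |(μ[D|m']) ω| := abs_mul _ _
                _ ≤ |(μ[η|m']) ω| * 1 := by
                    exact mul_le_mul_of_nonneg_left h (abs_nonneg _)
                _ = |(μ[η|m']) ω| := mul_one _
        _ ≤ (∫ ω, |η ω| ∂μ) + ∫ ω, |η ω| ∂μ := by
            refine add_le_add ?_ ?_
            · refine integral_mono (hmulD hηi).abs hηi.abs fun ω => ?_
              calc |η ω * D ω| = |η ω| * |D ω| := abs_mul _ _
                _ ≤ |η ω| * 1 := by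
                    refine mul_le_mul_of_nonneg_left ?_ (abs_nonneg _)
                    simpa [Real.norm_eq_abs] using hDbd ω
                _ = |η ω| := mul_one _
            · exact integral_abs_condExp_le _
        _ = 2 * ∫ ω, |η ω| ∂μ := by ring
        _ = 2 * dist φ ψ := by
            congr 1
            have aesm : AEStronglyMeasurable (fun x => |(φ : ℝ → ℝ) x - (ψ : ℝ → ℝ) x|) ν :=
              ((Lp.aestronglyMeasurable φ).sub (Lp.aestronglyMeasurable ψ)).norm.congr
                (Filter.Eventually.of_forall fun x => (Real.norm_eq_abs _))
            have hmap : ∫ ω, |(φ : ℝ → ℝ) (f ω) - (ψ : ℝ → ℝ) (f ω)| ∂μ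
                = ∫ x, |(φ : ℝ → ℝ) x - (ψ : ℝ → ℝ) x| ∂ν := by
              exact (integral_map hf.aemeasurable aesm).symm
            have hdist : dist φ ψ = ∫ x, |(φ : ℝ → ℝ) x - (ψ : ℝ → ℝ) x| ∂ν := by
              rw [dist_eq_norm, L1.norm_eq_integral_norm]
              refine integral_congr_ae ?_
              filter_upwards [Lp.coeFn_sub φ ψ] with x hx
              rw [Real.norm_eq_abs, hx, Pi.sub_apply]
            simp only [hη_def]
            rw [hmap, hdist]

    · -- a.e. congruence
      intro φ ψ hφψ hφ hPφ
      have hcomp : (fun ω => φ (f ω)) =ᵐ[μ] fun ω => ψ (f ω) :=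
        ae_of_ae_map hf.aemeasurable hφψ
      have hcomp2 : (fun ω => φ (f ω) * D ω) =ᵐ[μ] fun ω => ψ (f ω) * D ω := by
        filter_upwards [hcomp] with ω h; rw [h]
      have c1 := condExp_congr_ae (m := m') hcomp2
      have c2 := condExp_congr_ae (m := m') hcomp
      filter_upwards [c1, c2, hPφ] with ω h1' h2' h3'
      rw [← h1', h3', h2']
  -- apply with φ = id
  have hid : Integrable (fun x : ℝ => x) ν :=
    (integrable_map_measure aestronglyMeasurable_id hf.aemeasurable).mpr hfi
  exact hmain hid
theorem doubly_robust_misspecified_ps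
    {Ω E : Type*} [MeasurableSpace Ω] [StandardBorelSpace Ω] [Nonempty Ω]
    [mE : MeasurableSpace E]
    (μ : Measure Ω) [IsProbabilityMeasure μ]
    (X : Ω → E) (hX : Measurable X)
    (D Y1 Y0 Y : Ω → ℝ)
    (hD : Measurable D) (hD01 : ∀ ω, D ω = 0 ∨ D ω = 1)
    (hY1m : Measurable Y1) (hY0m : Measurable Y0)
    (hY1 : Integrable Y1 μ) (hY0 : Integrable Y0 μ)
    (hY : ∀ ω, Y ω = D ω * Y1 ω + (1 - D ω) * Y0 ω)
    (hUnconf : CondIndepFun (MeasurableSpace.comap X mE) hX.comap_le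
      (fun ω => (Y1 ω, Y0 ω)) D μ)
    -- misspecified propensity score p̃ : E → ℝ, measurable, bounded away from 0 and 1
    (ptilde : E → ℝ) (hptilde : Measurable ptilde)
    (ε : ℝ) (hε : 0 < ε) (hpb : ∀ x, ε ≤ ptilde x ∧ ptilde x ≤ 1 - ε) :
    μ[fun ω =>
        D ω * (Y ω - (μ[Y1 | MeasurableSpace.comap X mE]) ω) / ptilde (X ω)
          - (1 - D ω) * (Y ω - (μ[Y0 | MeasurableSpace.comap X mE]) ω) / (1 - ptilde (X ω))
          + (μ[Y1 | MeasurableSpace.comap X mE]) ω - (μ[Y0 | MeasurableSpace.comap X mE]) ω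
        | MeasurableSpace.comap X mE]
      =ᵐ[μ] fun ω =>
        (μ[Y1 | MeasurableSpace.comap X mE]) ω - (μ[Y0 | MeasurableSpace.comap X mE]) ω := by
  have hm' : MeasurableSpace.comap X mE ≤ ‹MeasurableSpace Ω› := hX.comap_le
  set m₁ : Ω → ℝ := μ[Y1 | MeasurableSpace.comap X mE] with hm₁_def
  set m₀ : Ω → ℝ := μ[Y0 | MeasurableSpace.comap X mE] with hm₀_def
  have hm₁i : Integrable m₁ μ := integrable_condExp
  have hm₀i : Integrable m₀ μ := integrable_condExp
  have hm₁sm : StronglyMeasurable[MeasurableSpace.comap X mE] m₁ := stronglyMeasurable_condExp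
  have hm₀sm : StronglyMeasurable[MeasurableSpace.comap X mE] m₀ := stronglyMeasurable_condExp
  have hDbd : ∀ ω, ‖D ω‖ ≤ 1 := fun ω => by rcases hD01 ω with h | h <;> simp [h]
  have hDi : Integrable D μ :=
    Integrable.mono' (integrable_const 1) hD.aestronglyMeasurable (ae_of_all _ hDbd)
  have hD' : Measurable (fun ω => 1 - D ω) := measurable_const.sub hD
  have hD'01 : ∀ ω, 1 - D ω = 0 ∨ 1 - D ω = 1 := fun ω => by
    rcases hD01 ω with h | h <;> simp [h]
  have hD'bd : ∀ ω, ‖1 - D ω‖ ≤ 1 := fun ω => by rcases hD01 ω with h | h <;> simp [h]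
  have hD'i : Integrable (fun ω => 1 - D ω) μ :=
    Integrable.mono' (integrable_const 1) hD'.aestronglyMeasurable (ae_of_all _ hD'bd)
  -- conditional independence of Y1 and D, and of Y0 and (1 - D)
  have hindep1 : CondIndepFun (MeasurableSpace.comap X mE) hX.comap_le Y1 D μ := by
    have h := hUnconf.comp (φ := Prod.fst) (ψ := id) measurable_fst measurable_id
    simpa [Function.comp_def] using h
  have hindep0 : CondIndepFun (MeasurableSpace.comap X mE) hX.comap_le Y0
      (fun ω => 1 - D ω) μ := by
    have h := hUnconf.comp (φ := Prod.snd) (ψ := fun x : ℝ => 1 - x) measurable_snd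
      (measurable_const.sub measurable_id)
    simpa [Function.comp_def] using h
  -- factorization
  have key1 : μ[fun ω => Y1 ω * D ω | MeasurableSpace.comap X mE] =ᵐ[μ]
      fun ω => m₁ ω * (μ[D | MeasurableSpace.comap X mE]) ω :=
    condexp_mul_of_condIndepFun hX.comap_le hY1m hY1 hD hD01 hindep1
  have key0 : μ[fun ω => Y0 ω * (1 - D ω) | MeasurableSpace.comap X mE] =ᵐ[μ]
      fun ω => m₀ ω * (μ[fun ω => 1 - D ω | MeasurableSpace.comap X mE]) ω :=
    condexp_mul_of_condIndepFun hX.comap_le hY0m hY0 hD' hD'01 hindep0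
  -- pull-out
  have hm₁D_int : Integrable (m₁ * D) μ :=
    (Integrable.bdd_mul hm₁i hD.aestronglyMeasurable (ae_of_all _ hDbd)).congr
      (Filter.Eventually.of_forall fun ω => mul_comm _ _)
  have hm₀D_int : Integrable (m₀ * fun ω => 1 - D ω) μ :=
    (Integrable.bdd_mul hm₀i hD'.aestronglyMeasurable (ae_of_all _ hD'bd)).congr
      (Filter.Eventually.of_forall fun ω => mul_comm _ _)
  have pull1 : μ[m₁ * D | MeasurableSpace.comap X mE] =ᵐ[μ]
      m₁ * μ[D | MeasurableSpace.comap X mE] :=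
    condExp_mul_of_stronglyMeasurable_left hm₁sm hm₁D_int hDi
  have pull0 : μ[m₀ * fun ω => 1 - D ω | MeasurableSpace.comap X mE] =ᵐ[μ]
      m₀ * μ[fun ω => 1 - D ω | MeasurableSpace.comap X mE] :=
    condExp_mul_of_stronglyMeasurable_left hm₀sm hm₀D_int hD'i
  -- integrability of centered terms
  have hZ1i : Integrable (fun ω => D ω * (Y1 ω - m₁ ω)) μ :=
    Integrable.bdd_mul (hY1.sub hm₁i) hD.aestronglyMeasurable (ae_of_all _ hDbd)
  have hZ0i : Integrable (fun ω => (1 - D ω) * (Y0 ω - m₀ ω)) μ :=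
    Integrable.bdd_mul (hY0.sub hm₀i) hD'.aestronglyMeasurable (ae_of_all _ hD'bd)
  -- conditional expectation of centered terms vanishes
  have hZ1 : μ[fun ω => D ω * (Y1 ω - m₁ ω) | MeasurableSpace.comap X mE] =ᵐ[μ] 0 := by
    have e : (fun ω => D ω * (Y1 ω - m₁ ω))
        = (fun ω => Y1 ω * D ω) - (m₁ * D) := by
      funext ω; simp [Pi.sub_apply, Pi.mul_apply]; ring
    rw [e]
    have hsub := condExp_sub (μ := μ) (m := MeasurableSpace.comap X mE)
      ((Integrable.bdd_mul hY1 hD.aestronglyMeasurable (ae_of_all _ hDbd)).congr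
        (Filter.Eventually.of_forall fun ω => mul_comm _ _)) hm₁D_int
    filter_upwards [hsub, key1, pull1] with ω h1 h2 h3
    simp only [Pi.sub_apply, Pi.mul_apply, Pi.zero_apply] at *
    rw [h1, h2, h3]
    ring
  have hZ0 : μ[fun ω => (1 - D ω) * (Y0 ω - m₀ ω) | MeasurableSpace.comap X mE] =ᵐ[μ] 0 := by
    have e : (fun ω => (1 - D ω) * (Y0 ω - m₀ ω))
        = (fun ω => Y0 ω * (1 - D ω)) - (m₀ * fun ω => 1 - D ω) := by
      funext ω; simp [Pi.sub_apply, Pi.mul_apply]; ring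
    rw [e]
    have hsub := condExp_sub (μ := μ) (m := MeasurableSpace.comap X mE)
      ((Integrable.bdd_mul hY0 hD'.aestronglyMeasurable (ae_of_all _ hD'bd)).congr
        (Filter.Eventually.of_forall fun ω => mul_comm _ _)) hm₀D_int
    filter_upwards [hsub, key0, pull0] with ω h1 h2 h3
    simp only [Pi.sub_apply, Pi.mul_apply, Pi.zero_apply] at *
    rw [h1, h2, h3]
    ring
  -- the bounded comap-measurable weights
  have hXc : @Measurable Ω E (MeasurableSpace.comap X mE) mE X := fun t ht => ⟨t, ht, rfl⟩
  have hg1m : @Measurable Ω ℝ (MeasurableSpace.comap X mE) _ (fun ω => (ptilde (X ω))⁻¹) :=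
    (hptilde.comp hXc).inv
  have hg0m : @Measurable Ω ℝ (MeasurableSpace.comap X mE) _
      (fun ω => (1 - ptilde (X ω))⁻¹) :=
    ((measurable_const.sub hptilde).comp hXc).inv
  have hε1 : ∀ x, 0 < ptilde x := fun x => lt_of_lt_of_le hε (hpb x).1
  have hε0 : ∀ x, 0 < 1 - ptilde x := fun x => by
    have := (hpb x).2; linarith
  have hg1bd : ∀ᵐ ω ∂μ, ‖(ptilde (X ω))⁻¹‖ ≤ ε⁻¹ := by
    refine ae_of_all _ fun ω => ?_
    rw [Real.norm_eq_abs, abs_of_pos (inv_pos.mpr (hε1 _))]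
    exact inv_anti₀ hε (hpb _).1
  have hg0bd : ∀ᵐ ω ∂μ, ‖(1 - ptilde (X ω))⁻¹‖ ≤ ε⁻¹ := by
    refine ae_of_all _ fun ω => ?_
    rw [Real.norm_eq_abs, abs_of_pos (inv_pos.mpr (hε0 _))]
    refine inv_anti₀ hε ?_
    have := (hpb (X ω)).2; linarith
  -- conditional expectations of weighted centered terms vanish
  have hA : μ[(fun ω => (ptilde (X ω))⁻¹) * (fun ω => D ω * (Y1 ω - m₁ ω))
      | MeasurableSpace.comap X mE] =ᵐ[μ] 0 := by
    have h := condExp_stronglyMeasurable_mul_of_bound hX.comap_le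
      hg1m.stronglyMeasurable hZ1i ε⁻¹ hg1bd
    refine h.trans ?_
    filter_upwards [hZ1] with ω h1
    simp only [Pi.mul_apply, Pi.zero_apply] at *
    rw [h1]; ring
  have hB : μ[(fun ω => (1 - ptilde (X ω))⁻¹) * (fun ω => (1 - D ω) * (Y0 ω - m₀ ω))
      | MeasurableSpace.comap X mE] =ᵐ[μ] 0 := by
    have h := condExp_stronglyMeasurable_mul_of_bound hX.comap_le
      hg0m.stronglyMeasurable hZ0i ε⁻¹ hg0bd
    refine h.trans ?_
    filter_upwards [hZ0] with ω h1
    simp only [Pi.mul_apply, Pi.zero_apply] at *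
    rw [h1]; ring
  -- integrability of the weighted terms
  have hAi : Integrable ((fun ω => (ptilde (X ω))⁻¹) * fun ω => D ω * (Y1 ω - m₁ ω)) μ :=
    Integrable.bdd_mul (c := ε⁻¹) hZ1i
      (hg1m.mono hm' le_rfl).aestronglyMeasurable hg1bd
  have hBi : Integrable ((fun ω => (1 - ptilde (X ω))⁻¹)
      * fun ω => (1 - D ω) * (Y0 ω - m₀ ω)) μ :=
    Integrable.bdd_mul (c := ε⁻¹) hZ0i
      (hg0m.mono hm' le_rfl).aestronglyMeasurable hg0bd
  -- rewrite the integrand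
  have hFeq : (fun ω =>
        D ω * (Y ω - m₁ ω) / ptilde (X ω)
          - (1 - D ω) * (Y ω - m₀ ω) / (1 - ptilde (X ω)) + m₁ ω - m₀ ω)
      = ((((fun ω => (ptilde (X ω))⁻¹) * fun ω => D ω * (Y1 ω - m₁ ω))
          - ((fun ω => (1 - ptilde (X ω))⁻¹) * fun ω => (1 - D ω) * (Y0 ω - m₀ ω)))
          + m₁) - m₀ := by
    funext ω
    simp only [Pi.sub_apply, Pi.add_apply, Pi.mul_apply]
    rw [hY ω]
    rcases hD01 ω with h | h <;> simp [h, div_eq_mul_inv] <;> ring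
  rw [hFeq]
  -- assemble
  have i1 : Integrable (((fun ω => (ptilde (X ω))⁻¹) * fun ω => D ω * (Y1 ω - m₁ ω))
      - ((fun ω => (1 - ptilde (X ω))⁻¹) * fun ω => (1 - D ω) * (Y0 ω - m₀ ω))) μ :=
    hAi.sub hBi
  have i2 : Integrable ((((fun ω => (ptilde (X ω))⁻¹) * fun ω => D ω * (Y1 ω - m₁ ω))
      - ((fun ω => (1 - ptilde (X ω))⁻¹) * fun ω => (1 - D ω) * (Y0 ω - m₀ ω))) + m₁) μ :=
    i1.add hm₁i
  have e1 := condExp_sub (μ := μ) (m := MeasurableSpace.comap X mE) i2 hm₀i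
  have e2 := condExp_add (μ := μ) (m := MeasurableSpace.comap X mE) i1 hm₁i
  have e3 := condExp_sub (μ := μ) (m := MeasurableSpace.comap X mE) hAi hBi
  have em₁ : μ[m₁ | MeasurableSpace.comap X mE] = m₁ :=
    condExp_of_stronglyMeasurable hX.comap_le hm₁sm hm₁i
  have em₀ : μ[m₀ | MeasurableSpace.comap X mE] = m₀ :=
    condExp_of_stronglyMeasurable hX.comap_le hm₀sm hm₀i
  filter_upwards [e1, e2, e3, hA, hB] with ω h1 h2 h3 h4 h5
  simp only [Pi.sub_apply, Pi.add_apply, Pi.zero_apply] at *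
  rw [h1, h2, h3, h4, h5, em₁, em₀]
  simp
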